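/- arXiv:math/0502359 — 8 statements merged into one kernel-verified Lean document; each statement's English description precedes it below -/
import Mathlib

section
/- Let p be a prime, P a finite p-group, and Q a normal subgroup of P. If α is an automorphism of P whose order is coprime to p, and α restricts to the identity on Q and induces the identity on the quotient P/Q, then α is the identity automorphism of P. -/
/-- If `α` is an automorphism of a finite `p`-group `P` of order coprime to `p`
which restricts to the identity on a normal subgroup `Q` and induces the identity
on `P/Q`, then `α` is the identity. -/
theorem stmt0 {p : ℕ} (hp : p.Prime) {P : Type*} [Group P] [Finite P]
    (hP : IsPGroup p P) (Q : Subgroup P) (hQn : Q.Normal)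
    (α : MulAut P) (hord : Nat.Coprime (orderOf α) p)
    (hfix : ∀ q ∈ Q, α q = q) (hquot : ∀ x : P, α x * x⁻¹ ∈ Q) :
    α = 1 := by
  have hq : ∀ x : P, x⁻¹ * α x ∈ Q := by
    intro x
    have h := hQn.conj_mem _ (hquot x) x⁻¹
    simpa [mul_assoc] using h
  have key : ∀ (x : P) (n : ℕ), (α ^ n) x = x * (x⁻¹ * α x) ^ n := by
    intro x n
    induction n with
    | zero => simp
    | succ n ih =>
      have hmem : (x⁻¹ * α x) ^ n ∈ Q := pow_mem (hq x) n
      rw [pow_succ', MulAut.mul_apply, ih, map_mul, hfix _ hmem, pow_succ']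
      simp [mul_assoc]
  haveI := Fact.mk hp
  obtain ⟨k, hk⟩ := (hP.to_subgroup Q).exists_card_eq
  have hdvd : orderOf α ∣ p ^ k := by
    apply orderOf_dvd_of_pow_eq_one
    ext x
    have hpow : (⟨x⁻¹ * α x, hq x⟩ : Q) ^ (p ^ k) = 1 := by
      rw [← hk]; exact pow_card_eq_one'
    have hpow' : (x⁻¹ * α x) ^ (p ^ k) = 1 := by
      have := congrArg (Subtype.val) hpow
      simpa using this
    simp [key x (p ^ k), hpow']
  have : orderOf α = 1 := by
    have hco : Nat.Coprime (orderOf α) (p ^ k) := hord.pow_right k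
    exact Nat.eq_one_of_dvd_coprimes hco dvd_rfl hdvd
  exact orderOf_eq_one_iff.mp this
end

section
/- Let p be a prime, P a finite p-group, and Q a normal subgroup of P. Then the set of automorphisms of P which restrict to the identity on Q and induce the identity on P/Q forms a subgroup of Aut(P) which is a p-group. -/
private lemma aux_pow_apply {P : Type*} [Group P] (Q : Subgroup P)
    (α : MulAut P) (hfix : ∀ q ∈ Q, α q = q) (x : P) (hx : x⁻¹ * α x ∈ Q) :
    ∀ n : ℕ, (α ^ n) x = x * (x⁻¹ * α x) ^ n := by
  intro n
  induction n with
  | zero => simp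
  | succ n ih =>
    rw [pow_succ', MulAut.mul_apply, ih, map_mul, map_pow,
      hfix _ hx]
    conv_rhs => rw [pow_succ', ← mul_assoc, mul_inv_cancel_left]

/-- The automorphisms of a finite `p`-group `P` restricting to the identity on a normal
subgroup `Q` and inducing the identity on `P/Q` form a subgroup of `Aut(P)` which is a
`p`-group. -/
theorem stmt1 {p : ℕ} (hp : p.Prime) {P : Type*} [Group P] [Finite P]
    (hP : IsPGroup p P) (Q : Subgroup P) (hQn : Q.Normal) :
    ∃ H : Subgroup (MulAut P),
      (∀ α : MulAut P, α ∈ H ↔ ((∀ q ∈ Q, α q = q) ∧ ∀ x : P, α x * x⁻¹ ∈ Q))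
      ∧ IsPGroup p H := by
  refine ⟨{ carrier := {α | (∀ q ∈ Q, α q = q) ∧ ∀ x : P, α x * x⁻¹ ∈ Q}
            one_mem' := ⟨fun q _ => rfl, fun x => by simpa using Q.one_mem⟩
            mul_mem' := ?_
            inv_mem' := ?_ }, fun α => Iff.rfl, ?_⟩
  · rintro α β ⟨hα1, hα2⟩ ⟨hβ1, hβ2⟩
    refine ⟨fun q hq => by simp [MulAut.mul_apply, hβ1 q hq, hα1 q hq], fun x => ?_⟩
    have h1 : β x * x⁻¹ ∈ Q := hβ2 x
    rw [MulAut.mul_apply]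
    have h2 : α (β x) * x⁻¹ = (α (β x) * (β x)⁻¹) * (β x * x⁻¹) := by group
    rw [h2]
    exact mul_mem (hα2 (β x)) h1
  · rintro α ⟨hα1, hα2⟩
    refine ⟨fun q hq => ?_, fun x => ?_⟩
    · have := hα1 q hq
      calc α⁻¹ q = α⁻¹ (α q) := by rw [this]
        _ = q := MulAut.inv_apply_self P α q
    · have h := hα2 (α⁻¹ x)
      rw [α.apply_inv_self] at h
      have : α⁻¹ x * x⁻¹ = (x * (α⁻¹ x)⁻¹)⁻¹ := by group
      rw [this]
      exact inv_mem h
  · haveI : Fact p.Prime := ⟨hp⟩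
    obtain ⟨n, hn⟩ := (IsPGroup.iff_card (p := p) (G := P)).mp hP
    intro g
    refine ⟨n, ?_⟩
    ext1
    push_cast
    obtain ⟨α, hα1, hα2⟩ := g
    show (α : MulAut P) ^ p ^ n = 1
    ext x
    have hx : x⁻¹ * α x ∈ Q := by
      have := hα2 x
      have h2 : x⁻¹ * α x = x⁻¹ * (α x * x⁻¹) * x := by group
      rw [h2]
      exact hQn.conj_mem' _ this x
    rw [aux_pow_apply Q α hα1 x hx (p ^ n), ← hn, pow_card_eq_one']
    simp
end

section
/- Let G be a finite group and p a prime. Then any two Sylow p-subgroups of G are conjugate by an element of O^p(G): for all S, S' ∈ Syl_p(G) there exists g ∈ O^p(G) with gSg⁻¹ = S'. -/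
/-- `O^p(G)`: the smallest normal subgroup of `G` whose quotient is a `p`-group. -/
def pResidual (p : ℕ) (G : Type*) [Group G] : Subgroup G :=
  sInf {N : Subgroup G | N.Normal ∧ ∀ g : G, ∃ k : ℕ, g ^ p ^ k ∈ N}

lemma pResidual_pow_mem {p : ℕ} (hp : p.Prime) {G : Type*} [Group G] [Finite G] (g : G) :
    ∃ k : ℕ, g ^ p ^ k ∈ pResidual p G := by
  have hg : 0 < orderOf g := (isOfFinOrder_of_finite g).orderOf_pos
  set n := orderOf g with hn
  set k := n.factorization p with hk
  refine ⟨k, ?_⟩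
  simp only [pResidual, Subgroup.mem_sInf]
  rintro N ⟨-, hN⟩
  obtain ⟨k', hk'⟩ := hN g
  have hdvd : p ^ k ∣ n := Nat.ordProj_dvd n p
  have horder : orderOf (g ^ p ^ k) = n / p ^ k :=
    orderOf_pow_of_dvd (pow_ne_zero _ hp.pos.ne') hdvd
  have hcop : Nat.Coprime p (orderOf (g ^ p ^ k)) := by
    rw [horder]; exact Nat.coprime_ordCompl hp hg.ne'
  have hmem : g ^ p ^ max k k' ∈ N := by
    have : g ^ p ^ max k k' = (g ^ p ^ k') ^ p ^ (max k k' - k') := by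
      rw [← pow_mul, ← pow_add, Nat.add_sub_cancel' (le_max_right k k')]
    rw [this]; exact pow_mem hk' _
  have hcop2 : Nat.Coprime (p ^ (max k k' - k)) (orderOf (g ^ p ^ k)) :=
    Nat.Coprime.pow_left _ hcop
  rcases Nat.lt_or_ge 1 (orderOf (g ^ p ^ k)) with h1 | h1
  case inr =>
    have h1' : orderOf (g ^ p ^ k) = 1 := le_antisymm h1
      (Nat.one_le_iff_ne_zero.mpr (by rw [horder]; exact (Nat.ordCompl_pos p hg.ne').ne'))
    rw [orderOf_eq_one_iff.mp h1']; exact one_mem N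
  case inl =>
    obtain ⟨u, -, hu⟩ := Nat.exists_mul_mod_eq_one_of_coprime hcop2 h1
    have key : g ^ p ^ k = (g ^ p ^ max k k') ^ u := by
      have h2 : (g ^ p ^ max k k') ^ u = (g ^ p ^ k) ^ (p ^ (max k k' - k) * u) := by
        rw [← pow_mul, ← pow_mul]
        congr 1
        rw [← mul_assoc, ← pow_add, Nat.add_sub_cancel' (le_max_left k k')]
      rw [h2]
      conv_rhs => rw [← pow_mod_orderOf]
      rw [hu, pow_one]
    rw [key]; exact pow_mem hmem u

lemma pResidual_normal (p : ℕ) (G : Type*) [Group G] : (pResidual p G).Normal := by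
  constructor
  intro m hm g
  simp only [pResidual, Subgroup.mem_sInf] at hm ⊢
  intro N hN
  exact hN.1.conj_mem m (hm N hN) g

/-- Any two Sylow `p`-subgroups of a finite group `G` are conjugate by an element
of `O^p(G)`. -/
theorem stmt3 {p : ℕ} (hp : p.Prime) {G : Type*} [Group G] [Finite G] (S S' : Sylow p G) :
    ∃ g ∈ pResidual p G,
      (S : Subgroup G).map (MulAut.conj g).toMonoidHom = (S' : Subgroup G) := by
  haveI : Fact p.Prime := ⟨hp⟩
  set N := pResidual p G with hNdef
  haveI hNnorm : N.Normal := pResidual_normal p G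
  have hQ : IsPGroup p (G ⧸ N) := by
    intro q
    obtain ⟨g, rfl⟩ := QuotientGroup.mk_surjective q
    obtain ⟨k, hk⟩ := pResidual_pow_mem hp g
    exact ⟨k, by rw [← QuotientGroup.mk_pow]; exact (QuotientGroup.eq_one_iff _).mpr hk⟩
  have hsup : N ⊔ (S : Subgroup G) = ⊤ := by
    rw [← Subgroup.index_eq_one]
    have h1 : (N ⊔ (S : Subgroup G)).index ∣ (S : Subgroup G).index :=
      Subgroup.index_dvd_of_le le_sup_right
    have h2 : (N ⊔ (S : Subgroup G)).index ∣ N.index :=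
      Subgroup.index_dvd_of_le le_sup_left
    obtain ⟨n, hn⟩ := IsPGroup.iff_card.mp hQ
    have hNidx : N.index = p ^ n := by rw [Subgroup.index, hn]
    have hpS : ¬ p ∣ (S : Subgroup G).index := Sylow.not_dvd_index S
    have hcop : Nat.Coprime (N ⊔ (S : Subgroup G)).index p :=
      Nat.Coprime.symm ((Nat.Prime.coprime_iff_not_dvd hp).mpr
        fun h => hpS (h.trans h1))
    exact Nat.Coprime.eq_one_of_dvd (hcop.pow_right n) (hNidx ▸ h2)
  obtain ⟨g, hg⟩ := MulAction.exists_smul_eq G S S'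
  have hgmem : g ∈ N ⊔ (S : Subgroup G) := hsup ▸ Subgroup.mem_top g
  rw [← SetLike.mem_coe, Subgroup.normal_mul] at hgmem
  obtain ⟨x, hx, y, hy, hxy⟩ := hgmem
  refine ⟨x, hx, ?_⟩
  have hyS : y • S = S := Sylow.smul_eq_iff_mem_normalizer.mpr (Subgroup.le_normalizer hy)
  have hxS : x • S = S' := by
    rw [← hg, ← hxy, mul_smul, hyS]
  calc (S : Subgroup G).map (MulAut.conj x).toMonoidHom
      = ((x • S : Sylow p G) : Subgroup G) := by
        rw [Sylow.coe_subgroup_smul, Subgroup.pointwise_smul_def]; rfl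
    _ = (S' : Subgroup G) := by rw [hxS]
end

section
/- Focal subgroup theorem: Let G be a finite group, p a prime, and S ∈ Syl_p(G). Then S ∩ [G,G] is generated by all elements of the form x⁻¹y where x, y ∈ S are conjugate in G: S ∩ [G,G] = ⟨ x⁻¹·(g x g⁻¹) : x ∈ S, g ∈ G, g x g⁻¹ ∈ S ⟩. -/
open MulAction Subgroup MonoidHom Function
open scoped commutatorElement

theorem my_transfer_pow {G : Type*} [Group G] {H : Subgroup G} {A : Type*} [CommGroup A]
    (ϕ : H →* A) [H.FiniteIndex] (g : G) (hg : g ∈ H)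
    (key : ∀ (k : ℕ) (g₀ : G) (h : g₀⁻¹ * g ^ k * g₀ ∈ H),
      ϕ ⟨g₀⁻¹ * g ^ k * g₀, h⟩ = ϕ ⟨g, hg⟩ ^ k) :
    transfer ϕ g = ϕ ⟨g, hg⟩ ^ H.index := by
  classical
  letI := H.fintypeQuotientOfFiniteIndex
  rw [transfer_eq_prod_quotient_orbitRel_zpowers_quot,
    Finset.prod_congr rfl (fun q _ => key _ _ _), Finset.prod_pow_eq_pow_sum]
  congr 1
  simp_rw [minimalPeriod_eq_card, index_eq_card, Nat.card_eq_fintype_card,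
    Fintype.card_congr (selfEquivSigmaOrbits (zpowers g) (G ⧸ H)), Fintype.card_sigma]
  rfl

/-- Focal subgroup theorem: for `S ∈ Syl_p(G)`, `S ∩ [G,G]` is generated by the elements
`x⁻¹ · (g x g⁻¹)` with `x ∈ S`, `g ∈ G` and `g x g⁻¹ ∈ S`. -/
theorem stmt8 {p : ℕ} (hp : p.Prime) {G : Type*} [Group G] [Finite G] (S : Sylow p G) :
    (S : Subgroup G) ⊓ commutator G
      = Subgroup.closure {y : G | ∃ x ∈ (S : Subgroup G), ∃ g : G,
          g * x * g⁻¹ ∈ (S : Subgroup G) ∧ y = x⁻¹ * (g * x * g⁻¹)} := by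
  haveI : Fact p.Prime := ⟨hp⟩
  set T : Set G := {y : G | ∃ x ∈ (S : Subgroup G), ∃ g : G,
      g * x * g⁻¹ ∈ (S : Subgroup G) ∧ y = x⁻¹ * (g * x * g⁻¹)} with hT
  set F : Subgroup G := Subgroup.closure T with hF
  -- T is closed under conjugation by elements of S
  have hTconj : ∀ s ∈ (S : Subgroup G), ∀ y ∈ T, s * y * s⁻¹ ∈ T := by
    rintro s hs y ⟨x, hx, g, hgx, rfl⟩
    refine ⟨s * x * s⁻¹, mul_mem (mul_mem hs hx) (inv_mem hs), s * g * s⁻¹, ?_, by group⟩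
    have : (s * g * s⁻¹) * (s * x * s⁻¹) * (s * g * s⁻¹)⁻¹ = s * (g * x * g⁻¹) * s⁻¹ := by group
    rw [this]
    exact mul_mem (mul_mem hs hgx) (inv_mem hs)
  have hFconj : ∀ s ∈ (S : Subgroup G), ∀ f ∈ F, s * f * s⁻¹ ∈ F := by
    intro s hs f hf
    have hmap : F.map (MulAut.conj s).toMonoidHom ≤ F := by
      rw [hF, MonoidHom.map_closure]
      refine Subgroup.closure_le _ |>.2 ?_
      rw [Set.image_subset_iff]
      intro y hy
      exact Subgroup.subset_closure (hTconj s hs y hy)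
    exact hmap ⟨f, hf, rfl⟩
  -- the focal subgroup inside S, as a subgroup of S
  letI FS : Subgroup (S : Subgroup G) := F.subgroupOf (S : Subgroup G)
  haveI hFSnormal : FS.Normal := by
    constructor
    intro n hn g
    simp only [FS, Subgroup.mem_subgroupOf] at hn ⊢
    exact hFconj g g.2 n hn
  -- the quotient S / FS is commutative
  letI : CommGroup ((S : Subgroup G) ⧸ FS) :=
    { (inferInstance : Group ((S : Subgroup G) ⧸ FS)) with
      mul_comm := by
        intro a b
        induction a using QuotientGroup.induction_on with | H x =>
        induction b using QuotientGroup.induction_on with | H y =>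
        rw [← QuotientGroup.mk_mul, ← QuotientGroup.mk_mul, QuotientGroup.eq]
        simp only [FS, Subgroup.mem_subgroupOf]
        refine Subgroup.subset_closure ?_
        refine ⟨(y : G), y.2, (x : G)⁻¹, ?_, ?_⟩
        · simpa using mul_mem (mul_mem (inv_mem x.2) y.2) x.2
        · push_cast
          group }
  set ϕ : (S : Subgroup G) →* ((S : Subgroup G) ⧸ FS) := QuotientGroup.mk' FS with hϕ
  -- transfer computation
  have key : ∀ s (hs : s ∈ (S : Subgroup G)),
      transfer ϕ s = ϕ ⟨s, hs⟩ ^ (S : Subgroup G).index := by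
    intro s hs
    refine my_transfer_pow ϕ s hs ?_
    intro k g₀ h
    rw [hϕ, QuotientGroup.mk'_apply, QuotientGroup.mk'_apply, ← QuotientGroup.mk_pow,
      QuotientGroup.eq]
    simp only [FS, Subgroup.mem_subgroupOf]
    refine Subgroup.subset_closure ?_
    refine ⟨g₀⁻¹ * s ^ k * g₀, h, g₀, ?_, ?_⟩
    · have he : g₀ * (g₀⁻¹ * s ^ k * g₀) * g₀⁻¹ = s ^ k := by group
      rw [he]; exact pow_mem hs k
    · push_cast
      group
  apply le_antisymm
  · intro s hs
    rw [Subgroup.mem_inf] at hs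
    obtain ⟨hsS, hsC⟩ := hs
    have h1 : transfer ϕ s = 1 := Abelianization.commutator_subset_ker (transfer ϕ) hsC
    rw [key s hsS] at h1
    have hdvd : orderOf (ϕ ⟨s, hsS⟩) ∣ (S : Subgroup G).index := orderOf_dvd_of_pow_eq_one h1
    obtain ⟨n, hn⟩ := (S.isPGroup'.to_quotient FS) (ϕ ⟨s, hsS⟩)
    have hdvd2 : orderOf (ϕ ⟨s, hsS⟩) ∣ p ^ n := orderOf_dvd_of_pow_eq_one hn
    have hcop : Nat.Coprime (p ^ n) (S : Subgroup G).index :=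
      (hp.coprime_pow_of_not_dvd S.not_dvd_index).symm
    have h2 : orderOf (ϕ ⟨s, hsS⟩) = 1 :=
      Nat.Coprime.eq_one_of_dvd (Nat.Coprime.coprime_dvd_left hdvd2 hcop) hdvd
    have h3 : ϕ ⟨s, hsS⟩ = 1 := orderOf_eq_one_iff.mp h2
    rw [hϕ, QuotientGroup.mk'_apply, QuotientGroup.eq_one_iff] at h3
    simpa [FS, Subgroup.mem_subgroupOf] using h3
  · refine Subgroup.closure_le _ |>.2 ?_
    rintro y ⟨x, hx, g, hgx, rfl⟩
    rw [SetLike.mem_coe, Subgroup.mem_inf]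
    constructor
    · exact mul_mem (inv_mem hx) hgx
    · have : x⁻¹ * (g * x * g⁻¹) = ⁅x⁻¹, g⁆ := by group
      rw [this]
      exact Subgroup.commutator_mem_commutator (Subgroup.mem_top _) (Subgroup.mem_top _)
end

section
/- Let G be a finite group and p a prime. If A is a Sylow p-subgroup of G which is contained in the center Z(G), then G is the internal direct product of A and O^p(G); in particular A ∩ O^p(G) = 1, G = A·O^p(G), and O^p(G) is a normal p-complement. -/
/-- If a Sylow `p`-subgroup `A` of a finite group `G` is central, then `G` is the internal
direct product of `A` and `O^p(G)`: `A ∩ O^p(G) = 1`, `G = A · O^p(G)`, and `O^p(G)` is a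
normal `p`-complement (its order is coprime to `p`). -/
theorem stmt9 {p : ℕ} (hp : p.Prime) {G : Type*} [Group G] [Finite G]
    (A : Sylow p G) (hA : (A : Subgroup G) ≤ Subgroup.center G) :
    (A : Subgroup G) ⊓ pResidual p G = ⊥
    ∧ (∀ g : G, ∃ a ∈ (A : Subgroup G), ∃ n ∈ pResidual p G, g = a * n)
    ∧ Nat.Coprime (Nat.card ↥(pResidual p G)) p := by
  haveI : Fact p.Prime := ⟨hp⟩
  have hP : Subgroup.normalizer (A : Set G) ≤ Subgroup.centralizer (A : Set G) := by
    intro g _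
    rw [Subgroup.mem_centralizer_iff]
    intro a ha
    exact (Subgroup.mem_center_iff.mp (hA ha) g).symm
  set K := (MonoidHom.transferSylow A hP).ker with hK
  have hcomp : Subgroup.IsComplement' K (A : Subgroup G) :=
    MonoidHom.ker_transferSylow_isComplement' A hP
  have hKcard : ¬ p ∣ Nat.card K := MonoidHom.not_dvd_card_ker_transferSylow A hP
  -- K belongs to the defining set of `pResidual`
  obtain ⟨n, hn⟩ := IsPGroup.iff_card.mp A.2
  have hKmem : K ∈ {N : Subgroup G | N.Normal ∧ ∀ g : G, ∃ k : ℕ, g ^ p ^ k ∈ N} := by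
    refine ⟨MonoidHom.normal_ker _, fun g => ⟨n, ?_⟩⟩
    have hidx : K.index = p ^ n := by
      rw [hcomp.symm.index_eq_card, hn]
    have := Subgroup.pow_index_mem K g
    rwa [hidx] at this
  -- K is contained in every element of the set
  have hle : K ≤ pResidual p G := by
    refine le_sInf fun N hN => fun k hk => ?_
    haveI := hN.1
    obtain ⟨m, hm⟩ := hN.2 k
    set kb : G ⧸ N := QuotientGroup.mk k with hkb
    have h1 : orderOf kb ∣ p ^ m := by
      apply orderOf_dvd_of_pow_eq_one
      rw [hkb, ← QuotientGroup.mk_pow, QuotientGroup.eq_one_iff]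
      exact hm
    have h2 : orderOf kb ∣ Nat.card K := by
      have : orderOf kb ∣ orderOf k := orderOf_map_dvd (QuotientGroup.mk' N) k
      exact this.trans (Subgroup.orderOf_dvd_natCard K hk)
    have hco : Nat.Coprime (p ^ m) (Nat.card K) :=
      (Nat.Prime.coprime_iff_not_dvd hp).mpr hKcard |>.pow_left m
    have : orderOf kb ∣ 1 := by
      have := Nat.dvd_gcd h1 h2
      rwa [Nat.Coprime.gcd_eq_one hco] at this
    have hone : kb = 1 := orderOf_eq_one_iff.mp (Nat.dvd_one.mp this)
    exact (QuotientGroup.eq_one_iff k).mp hone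
  have heq : pResidual p G = K := le_antisymm (sInf_le hKmem) hle
  refine ⟨?_, ?_, ?_⟩
  · rw [heq]
    exact disjoint_iff.mp hcomp.symm.disjoint
  · intro g
    obtain ⟨x, hx, -⟩ := hcomp.symm.existsUnique g
    exact ⟨x.1, x.1.2, x.2, heq.ge x.2.2, hx.symm⟩
  · rw [heq]
    exact ((Nat.Prime.coprime_iff_not_dvd hp).mpr hKcard).symm
end

section
/- Let G be a finite group, p a prime, S ∈ Syl_p(G), and P ≤ S. Then the following are equivalent: (1) for every g ∈ G with gPg⁻¹ ≤ S, one has C_S(gPg⁻¹) = Z(gPg⁻¹); (2) Z(P) is a Sylow p-subgroup of C_G(P) (i.e., P is p-centric in G). -/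
/-- The conjugate subgroup `g P g⁻¹`. -/
def conjBy {G : Type*} [Group G] (g : G) (P : Subgroup G) : Subgroup G :=
  P.map (MulAut.conj g).toMonoidHom

open Pointwise

section ConjByAux

variable {G : Type*} [Group G]

lemma conjBy_eq_smul (g : G) (P : Subgroup G) : conjBy g P = MulAut.conj g • P := rfl

lemma mem_conjBy {g x : G} {P : Subgroup G} :
    x ∈ conjBy g P ↔ g⁻¹ * x * g ∈ P := by
  constructor
  · rintro ⟨y, hy, rfl⟩
    simpa [MulAut.conj, mul_assoc] using hy
  · intro h
    exact ⟨g⁻¹ * x * g, h, by simp [MulAut.conj]; group⟩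

lemma conjBy_mono (g : G) {P Q : Subgroup G} (h : P ≤ Q) : conjBy g P ≤ conjBy g Q := by
  intro x hx
  rw [mem_conjBy] at hx ⊢
  exact h hx

lemma conjBy_conjBy_inv (g : G) (P : Subgroup G) : conjBy g (conjBy g⁻¹ P) = P := by
  simp only [conjBy_eq_smul, map_inv (MulAut.conj : G →* MulAut G), smul_inv_smul]

lemma conjBy_inv_conjBy (g : G) (P : Subgroup G) : conjBy g⁻¹ (conjBy g P) = P := by
  simpa using conjBy_conjBy_inv g⁻¹ P

lemma conjBy_inf (g : G) (A B : Subgroup G) :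
    conjBy g (A ⊓ B) = conjBy g A ⊓ conjBy g B := by
  simp only [conjBy_eq_smul, Subgroup.smul_inf]

lemma conjBy_centralizer (g : G) (P : Subgroup G) :
    conjBy g (Subgroup.centralizer (P : Set G))
      = Subgroup.centralizer ((conjBy g P : Subgroup G) : Set G) := by
  ext x
  simp only [mem_conjBy, Subgroup.mem_centralizer_iff, SetLike.mem_coe]
  constructor
  · intro hx k hk
    have h1 := hx _ hk
    have e : k * x = g * (g⁻¹ * k * g * (g⁻¹ * x * g)) * g⁻¹ := by group
    rw [e, h1]
    group
  · intro hx k hk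
    have h1 := hx (g * k * g⁻¹) (by
      have e : g⁻¹ * (g * k * g⁻¹) * g = k := by group
      rw [e]; exact hk)
    have e : k * (g⁻¹ * x * g) = g⁻¹ * (g * k * g⁻¹ * x) * g := by group
    rw [e, h1]
    group

lemma centralizer_le_normalizer' (P : Subgroup G) :
    Subgroup.centralizer (P : Set G) ≤ Subgroup.normalizer (P : Set G) := by
  intro x hx
  rw [Subgroup.mem_normalizer_iff]
  intro y
  constructor
  · intro hy
    have h1 := Subgroup.mem_centralizer_iff.mp hx y hy
    have e : x * y * x⁻¹ = y := by rw [← h1]; group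
    rw [e]; exact hy
  · intro hy
    have h1 := Subgroup.mem_centralizer_iff.mp hx _ hy
    have h2 : x * y = x * (x * y * x⁻¹) := by
      calc x * y = x * y * x⁻¹ * x := by group
        _ = x * (x * y * x⁻¹) := h1
    rw [show y = x * y * x⁻¹ from mul_left_cancel h2]
    exact hy

end ConjByAux

/-- For `P ≤ S ∈ Syl_p(G)`: every `G`-conjugate of `P` contained in `S` satisfies
`C_S(gPg⁻¹) = Z(gPg⁻¹)` if and only if `Z(P)` is a Sylow `p`-subgroup of `C_G(P)`
(`P` is `p`-centric in `G`). -/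
theorem stmt10 {p : ℕ} (hp : p.Prime) {G : Type*} [Group G] [Finite G]
    (S : Sylow p G) (P : Subgroup G) (hP : P ≤ S) :
    (∀ g : G, conjBy g P ≤ (S : Subgroup G) →
        (S : Subgroup G) ⊓ Subgroup.centralizer ((conjBy g P : Subgroup G) : Set G)
          = conjBy g P ⊓ Subgroup.centralizer ((conjBy g P : Subgroup G) : Set G))
    ↔ ∃ T : Sylow p ↥(Subgroup.centralizer (P : Set G)),
        (T : Subgroup ↥(Subgroup.centralizer (P : Set G)))
          = (P ⊓ Subgroup.centralizer (P : Set G)).subgroupOf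
              (Subgroup.centralizer (P : Set G)) := by
  haveI := Fact.mk hp
  have hPp : IsPGroup p P := S.isPGroup'.to_le hP
  constructor
  · intro h1
    -- every p-subgroup of C_G(P) is contained in P ⊓ C_G(P)
    have key : ∀ R : Subgroup G, IsPGroup p R →
        R ≤ Subgroup.centralizer (P : Set G) →
        R ≤ P ⊓ Subgroup.centralizer (P : Set G) := by
      intro R hR hRC
      refine le_inf ?_ hRC
      have hnorm : R ≤ Subgroup.normalizer (P : Set G) := hRC.trans (centralizer_le_normalizer' P)
      have hPR : IsPGroup p (P ⊔ R : Subgroup G) :=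
        IsPGroup.to_sup_of_normal_left' hPp hR hnorm
      obtain ⟨T0, hT0⟩ := hPR.exists_le_sylow
      obtain ⟨g, hg⟩ := MulAction.exists_smul_eq G T0 S
      have hgS : conjBy g (T0 : Subgroup G) = (S : Subgroup G) := by
        rw [conjBy_eq_smul, ← Sylow.coe_subgroup_smul, hg]
      have hsup : conjBy g (P ⊔ R) ≤ (S : Subgroup G) := by
        rw [← hgS]; exact conjBy_mono g hT0
      have hgP : conjBy g P ≤ (S : Subgroup G) :=
        le_trans (conjBy_mono g le_sup_left) hsup
      have hgR : conjBy g R ≤ (S : Subgroup G) :=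
        le_trans (conjBy_mono g le_sup_right) hsup
      have hgRC : conjBy g R ≤ Subgroup.centralizer ((conjBy g P : Subgroup G) : Set G) := by
        rw [← conjBy_centralizer]; exact conjBy_mono g hRC
      have hmain := h1 g hgP
      have hle : conjBy g R ≤ conjBy g P :=
        le_trans (le_trans (le_inf hgR hgRC) (le_of_eq hmain)) inf_le_left
      calc R = conjBy g⁻¹ (conjBy g R) := (conjBy_inv_conjBy g R).symm
        _ ≤ conjBy g⁻¹ (conjBy g P) := conjBy_mono _ hle
        _ = P := conjBy_inv_conjBy g P
    have hZ : IsPGroup p ((P ⊓ Subgroup.centralizer (P : Set G) : Subgroup G)) :=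
      hPp.to_le inf_le_left
    have hZC : IsPGroup p
        ((P ⊓ Subgroup.centralizer (P : Set G)).subgroupOf
          (Subgroup.centralizer (P : Set G))) := hZ.comap_subtype
    obtain ⟨T, hT⟩ := hZC.exists_le_sylow
    refine ⟨T, ?_⟩
    have hmap : (T : Subgroup ↥(Subgroup.centralizer (P : Set G))).map
        (Subgroup.centralizer (P : Set G)).subtype
        = P ⊓ Subgroup.centralizer (P : Set G) := by
      apply le_antisymm
      · exact key _ (T.isPGroup'.map _) (Subgroup.map_subtype_le _)
      · have h2 := Subgroup.map_mono (f := (Subgroup.centralizer (P : Set G)).subtype) hT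
        rwa [Subgroup.subgroupOf_map_subtype, inf_assoc, inf_idem] at h2
    calc (T : Subgroup ↥(Subgroup.centralizer (P : Set G)))
        = ((T : Subgroup ↥(Subgroup.centralizer (P : Set G))).map
            (Subgroup.centralizer (P : Set G)).subtype).subgroupOf
            (Subgroup.centralizer (P : Set G)) :=
          (Subgroup.comap_map_eq_self_of_injective
            (Subgroup.centralizer (P : Set G)).subtype_injective _).symm
      _ = (P ⊓ Subgroup.centralizer (P : Set G)).subgroupOf
            (Subgroup.centralizer (P : Set G)) := by rw [hmap]
  · rintro ⟨T, hT⟩ g hgP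
    refine le_antisymm ?_ (inf_le_inf_right _ hgP)
    have hRp : IsPGroup p
        ((S : Subgroup G) ⊓ Subgroup.centralizer ((conjBy g P : Subgroup G) : Set G)
          : Subgroup G) := S.isPGroup'.to_le inf_le_left
    have hR'p : IsPGroup p (conjBy g⁻¹
        ((S : Subgroup G) ⊓ Subgroup.centralizer ((conjBy g P : Subgroup G) : Set G))) :=
      hRp.map _
    have hR'C : conjBy g⁻¹
        ((S : Subgroup G) ⊓ Subgroup.centralizer ((conjBy g P : Subgroup G) : Set G))
        ≤ Subgroup.centralizer (P : Set G) := by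
      refine le_trans (conjBy_mono _ inf_le_right) ?_
      rw [conjBy_centralizer, conjBy_inv_conjBy]
    have hZle : P ⊓ Subgroup.centralizer (P : Set G) ≤ conjBy g⁻¹
        ((S : Subgroup G) ⊓ Subgroup.centralizer ((conjBy g P : Subgroup G) : Set G)) := by
      have h2 := conjBy_mono g⁻¹
        (inf_le_inf_right (Subgroup.centralizer ((conjBy g P : Subgroup G) : Set G)) hgP)
      rwa [conjBy_inf, conjBy_centralizer, conjBy_inv_conjBy] at h2
    have hsub : (conjBy g⁻¹
        ((S : Subgroup G) ⊓ Subgroup.centralizer ((conjBy g P : Subgroup G) : Set G))).subgroupOf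
        (Subgroup.centralizer (P : Set G)) = (T : Subgroup ↥(Subgroup.centralizer (P : Set G))) :=
      T.3 hR'p.comap_subtype (hT ▸ Subgroup.comap_mono hZle)
    rw [hT] at hsub
    have hmapped := congrArg
      (Subgroup.map (Subgroup.centralizer (P : Set G)).subtype) hsub
    rw [Subgroup.subgroupOf_map_subtype, Subgroup.subgroupOf_map_subtype,
      inf_of_le_left hR'C, inf_assoc, inf_idem] at hmapped
    have hR'le : conjBy g⁻¹
        ((S : Subgroup G) ⊓ Subgroup.centralizer ((conjBy g P : Subgroup G) : Set G))
        ≤ P ⊓ Subgroup.centralizer (P : Set G) := le_of_eq hmapped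
    have hfinal := conjBy_mono g hR'le
    rwa [conjBy_conjBy_inv, conjBy_inf, conjBy_centralizer] at hfinal
end

section
/- Extension axiom for fusion in finite groups: Let G be a finite group, p a prime, S ∈ Syl_p(G). Let P ≤ S and g ∈ G with gPg⁻¹ ≤ S, and assume C_S(gPg⁻¹) ∈ Syl_p(C_G(gPg⁻¹)). Define N = { x ∈ N_S(P) : ∃ y ∈ N_S(gPg⁻¹) such that (gxg⁻¹)·u·(gxg⁻¹)⁻¹ = y·u·y⁻¹ for all u ∈ gPg⁻¹ }. Then there exists h ∈ G such that hNh⁻¹ ≤ S and h·u·h⁻¹ = g·u·g⁻¹ for all u ∈ P. -/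
section Aux

open Subgroup Pointwise

variable {G : Type*} [Group G]

lemma normalizer_le_centralizer_normalizer (Q : Subgroup G) :
    Subgroup.normalizer (Q : Set G) ≤ Subgroup.normalizer ((Subgroup.centralizer (Q : Set G) : Subgroup G) : Set G) := by
  intro n hn
  rw [Subgroup.mem_normalizer_iff]
  intro z
  constructor
  · intro hz
    rw [Subgroup.mem_centralizer_iff] at hz ⊢
    intro u hu
    have hu' : n⁻¹ * u * n ∈ Q := by
      rw [Subgroup.mem_normalizer_iff''] at hn
      exact (hn u).mp hu
    have h := hz (n⁻¹ * u * n) hu'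
    have e1 : u * (n * z * n⁻¹) = n * ((n⁻¹ * u * n) * z) * n⁻¹ := by group
    rw [e1, h]; group
  · intro hz
    rw [Subgroup.mem_centralizer_iff] at hz ⊢
    intro u hu
    have hu' : n * u * n⁻¹ ∈ Q := by
      rw [Subgroup.mem_normalizer_iff] at hn
      exact (hn u).mp hu
    have h := hz (n * u * n⁻¹) hu'
    have e1 : u * z = n⁻¹ * ((n * u * n⁻¹) * (n * z * n⁻¹)) * n := by group
    rw [e1, h]; group

lemma decomp_sup (A C : Subgroup G) (hnorm : A ≤ Subgroup.normalizer (C : Set G)) :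
    ∀ m ∈ A ⊔ C, ∃ n ∈ A, ∃ z ∈ C, m = n * z := by
  have hconj : ∀ n ∈ A, ∀ z ∈ C, n⁻¹ * z * n ∈ C := by
    intro n hn z hz
    have h := hnorm hn
    rw [Subgroup.mem_normalizer_iff''] at h
    exact (h z).mp hz
  let D : Subgroup G :=
    { carrier := {m | ∃ n ∈ A, ∃ z ∈ C, m = n * z}
      one_mem' := ⟨1, one_mem _, 1, one_mem _, by group⟩
      mul_mem' := by
        rintro a b ⟨n₁, hn₁, z₁, hz₁, rfl⟩ ⟨n₂, hn₂, z₂, hz₂, rfl⟩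
        exact ⟨n₁ * n₂, mul_mem hn₁ hn₂, (n₂⁻¹ * z₁ * n₂) * z₂,
          mul_mem (hconj n₂ hn₂ z₁ hz₁) hz₂, by group⟩
      inv_mem' := by
        rintro a ⟨n, hn, z, hz, rfl⟩
        exact ⟨n⁻¹, inv_mem hn, n * z⁻¹ * n⁻¹, by
          have := hconj n⁻¹ (inv_mem hn) z⁻¹ (inv_mem hz); simpa using this, by group⟩ }
  intro m hm
  have hAD : A ≤ D := fun a ha => ⟨a, ha, 1, one_mem _, by group⟩
  have hCD : C ≤ D := fun c hc => ⟨1, one_mem _, c, hc, by group⟩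
  exact sup_le hAD hCD hm

lemma key_conj {p : ℕ} [Fact p.Prime] [Finite G]
    (A C K : Subgroup G) (hA : IsPGroup p A) (hK : IsPGroup p K)
    (hnorm : A ≤ Subgroup.normalizer (C : Set G))
    (hidx : ¬ p ∣ (A ⊓ C).relIndex C)
    (hKle : K ≤ A ⊔ C) :
    ∃ m ∈ A ⊔ C, ∀ k ∈ K, m * k * m⁻¹ ∈ A := by
  set M : Subgroup G := A ⊔ C with hM
  have hAM : A ≤ M := le_sup_left
  have hCM : C ≤ M := le_sup_right
  have hMnorm : M ≤ Subgroup.normalizer (C : Set G) := sup_le hnorm le_normalizer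
  set A' : Subgroup ↥M := A.subgroupOf M with hA'def
  set C' : Subgroup ↥M := C.subgroupOf M with hC'def
  have hC'normal : C'.Normal := by
    constructor
    intro c hc m
    rw [hC'def, Subgroup.mem_subgroupOf] at hc ⊢
    have h := hMnorm m.2
    rw [Subgroup.mem_normalizer_iff] at h
    exact (h (c : G)).mp hc
  have htop : A' ⊔ C' = ⊤ := by
    have hs := (Subgroup.subgroupOf_sup hAM hCM).symm
    rw [hA'def, hC'def, hs, hM]
    exact Subgroup.subgroupOf_self (H := A ⊔ C)
  have hA'p : IsPGroup p A' := hA.comap_subtype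
  have hrel1 : (A' ⊓ C').relIndex A' * A'.index = (A' ⊓ C').index :=
    Subgroup.relIndex_mul_index inf_le_left
  have hrel2 : (A' ⊓ C').relIndex C' * C'.index = (A' ⊓ C').index :=
    Subgroup.relIndex_mul_index inf_le_right
  have hCidx : C'.index = (A' ⊓ C').relIndex A' := by
    rw [← Subgroup.relIndex_top_right, ← htop, Subgroup.relIndex_sup_right,
      ← Subgroup.inf_relIndex_right C' A', inf_comm]
  have hne : (A' ⊓ C').relIndex A' ≠ 0 :=
    Subgroup.index_ne_zero_of_finite
  have hAidx : A'.index = (A' ⊓ C').relIndex C' := by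
    have h := hrel1.trans hrel2.symm
    rw [hCidx, mul_comm ((A' ⊓ C').relIndex C') ((A' ⊓ C').relIndex A')] at h
    exact Nat.eq_of_mul_eq_mul_left (Nat.pos_of_ne_zero hne) h
  have hAC' : A' ⊓ C' = (A ⊓ C).subgroupOf M := by
    rw [hA'def, hC'def, Subgroup.subgroupOf, Subgroup.subgroupOf, Subgroup.subgroupOf,
      Subgroup.comap_inf]
  have hAidx2 : ¬ p ∣ A'.index := by
    rw [hAidx, hAC', hC'def, Subgroup.relIndex_subgroupOf hCM]
    exact hidx
  obtain ⟨TA, hTA⟩ := hA'p.exists_le_sylow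
  have hATA : A' = (TA : Subgroup ↥M) := by
    have h1 : A'.relIndex TA * (TA : Subgroup ↥M).index = A'.index :=
      Subgroup.relIndex_mul_index hTA
    have h2 : ¬ p ∣ A'.relIndex TA := fun hd => hAidx2 (h1 ▸ hd.mul_right _)
    have h3 : A'.relIndex TA ∣ Nat.card ↥(TA : Subgroup ↥M) :=
      Subgroup.index_dvd_card (A'.subgroupOf (TA : Subgroup ↥M))
    obtain ⟨n, hn⟩ := IsPGroup.iff_card.mp TA.2
    rw [hn] at h3
    have hcop : Nat.Coprime (A'.relIndex TA) (p ^ n) :=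
      Nat.Coprime.pow_right n (((Fact.out : p.Prime).coprime_iff_not_dvd.mpr h2).symm)
    have h4 : A'.relIndex TA = 1 := Nat.eq_one_of_dvd_one (hcop ▸ Nat.dvd_gcd dvd_rfl h3)
    exact le_antisymm hTA (Subgroup.relIndex_eq_one.mp h4)
  have hK'p : IsPGroup p (K.subgroupOf M) := hK.comap_subtype
  obtain ⟨TK, hTK⟩ := hK'p.exists_le_sylow
  obtain ⟨m, hm⟩ := MulAction.exists_smul_eq (↥M) TK TA
  refine ⟨(m : G), m.2, ?_⟩
  intro k hk
  have hkM : k ∈ M := hKle hk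
  have hk' : (⟨k, hkM⟩ : ↥M) ∈ TK := hTK (Subgroup.mem_subgroupOf.mpr hk)
  have h5 : MulAut.conj m • (⟨k, hkM⟩ : ↥M) ∈ MulAut.conj m • (TK : Subgroup ↥M) :=
    Subgroup.smul_mem_pointwise_smul _ _ _ hk'
  have h6 : MulAut.conj m • (TK : Subgroup ↥M) = (TA : Subgroup ↥M) := by
    have := congrArg (fun (T : Sylow p ↥M) => (T : Subgroup ↥M)) hm
    simpa [Sylow.smul_def, Sylow.pointwise_smul_def] using this
  rw [h6, ← hATA] at h5
  have h8 : ((m * ⟨k, hkM⟩ * m⁻¹ : ↥M) : G) ∈ A := by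
    have : (MulAut.conj m • (⟨k, hkM⟩ : ↥M)) ∈ A' := h5
    rw [hA'def, Subgroup.mem_subgroupOf] at this
    simpa [MulAut.conj_apply] using this
  simpa using h8

end Aux

/-- Extension axiom for fusion in finite groups.  Let `P ≤ S ∈ Syl_p(G)`, `g ∈ G` with
`gPg⁻¹ ≤ S`, and assume `C_S(gPg⁻¹) ∈ Syl_p(C_G(gPg⁻¹))`.  Let
`N = {x ∈ N_S(P) : ∃ y ∈ N_S(gPg⁻¹), c_{gxg⁻¹} = c_y on gPg⁻¹}`.  Then there is `h ∈ G`
with `hNh⁻¹ ≤ S` and `h u h⁻¹ = g u g⁻¹` for all `u ∈ P`. -/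
theorem stmt14 {p : ℕ} (hp : p.Prime) {G : Type*} [Group G] [Finite G]
    (S : Sylow p G) (P : Subgroup G) (hPS : P ≤ S) (g : G)
    (hg : conjBy g P ≤ (S : Subgroup G))
    (hfc : ∃ T : Sylow p ↥(Subgroup.centralizer ((conjBy g P : Subgroup G) : Set G)),
      (T : Subgroup ↥(Subgroup.centralizer ((conjBy g P : Subgroup G) : Set G)))
        = ((S : Subgroup G) ⊓ Subgroup.centralizer ((conjBy g P : Subgroup G) : Set G)).subgroupOf
            (Subgroup.centralizer ((conjBy g P : Subgroup G) : Set G))) :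
    ∃ h : G,
      (∀ x ∈ (S : Subgroup G) ⊓ Subgroup.normalizer (P : Set G),
        (∃ y ∈ (S : Subgroup G) ⊓ Subgroup.normalizer ((conjBy g P : Subgroup G) : Set G),
          ∀ u ∈ conjBy g P,
            (g * x * g⁻¹) * u * (g * x * g⁻¹)⁻¹ = y * u * y⁻¹) →
        h * x * h⁻¹ ∈ (S : Subgroup G))
      ∧ ∀ u ∈ P, h * u * h⁻¹ = g * u * g⁻¹ := by
  haveI : Fact p.Prime := ⟨hp⟩
  set Q : Subgroup G := conjBy g P with hQ
  set C : Subgroup G := Subgroup.centralizer (Q : Set G) with hC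
  set A : Subgroup G := (S : Subgroup G) ⊓ Subgroup.normalizer (Q : Set G) with hA
  have hCle : C ≤ Subgroup.normalizer (Q : Set G) := by
    intro z hz
    rw [hC, Subgroup.mem_centralizer_iff] at hz
    rw [Subgroup.mem_normalizer_iff]
    intro u
    constructor
    · intro hu
      have h := hz u hu
      have e : z * u * z⁻¹ = u := by rw [← h]; group
      rw [e]; exact hu
    · intro hu
      have h := hz _ hu
      have e : u = z * u * z⁻¹ := by
        calc u = z⁻¹ * ((z * u * z⁻¹) * z) := by group
        _ = z⁻¹ * (z * (z * u * z⁻¹)) := by rw [h]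
        _ = z * u * z⁻¹ := by group
      rw [e]; exact hu
  have hnorm : A ≤ Subgroup.normalizer (C : Set G) :=
    le_trans inf_le_right (normalizer_le_centralizer_normalizer Q)
  -- the subgroup N
  set N : Subgroup G := ((S : Subgroup G) ⊓ Subgroup.normalizer (P : Set G)) ⊓
    Subgroup.comap (MulAut.conj g).toMonoidHom (A ⊔ C) with hN
  have hAp : IsPGroup p A := S.2.to_le inf_le_left
  have hNp : IsPGroup p N := S.2.to_le (le_trans inf_le_left inf_le_left)
  have hKp : IsPGroup p (conjBy g N) := hNp.map _
  have hKle : conjBy g N ≤ A ⊔ C := by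
    rintro k hk
    obtain ⟨x, hx, rfl⟩ := Subgroup.mem_map.mp hk
    exact hx.2
  have hidx : ¬ p ∣ (A ⊓ C).relIndex C := by
    have hACeq : A ⊓ C = (S : Subgroup G) ⊓ C := by
      rw [hA, inf_assoc, inf_comm (Subgroup.normalizer (Q : Set G)) C, inf_eq_left.mpr hCle]
    rw [hACeq]
    obtain ⟨T, hT⟩ := hfc
    have : ((S : Subgroup G) ⊓ C).relIndex C = (T : Subgroup ↥C).index := by
      rw [Subgroup.relIndex, hT]
    rw [this]
    exact Sylow.not_dvd_index' T Subgroup.index_ne_zero_of_finite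
  obtain ⟨m, hmM, hmconj⟩ := key_conj A C (conjBy g N) hAp hKp hnorm hidx hKle
  obtain ⟨n, hn, z, hz, rfl⟩ := decomp_sup A C hnorm m hmM
  refine ⟨z * g, ?_, ?_⟩
  · intro x hx hexy
    obtain ⟨y, hy, hyc⟩ := hexy
    have hw : y⁻¹ * (g * x * g⁻¹) ∈ C := by
      rw [hC, Subgroup.mem_centralizer_iff]
      intro u hu
      have h := hyc u hu
      have e : u * (y⁻¹ * (g * x * g⁻¹)) = y⁻¹ * (y * u * y⁻¹) * (g * x * g⁻¹) := by group
      rw [e, ← h]; group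
    have hxN : x ∈ N := by
      refine ⟨hx, ?_⟩
      have e : g * x * g⁻¹ = y * (y⁻¹ * (g * x * g⁻¹)) := by group
      have : g * x * g⁻¹ ∈ A ⊔ C := by
        rw [e]
        exact mul_mem (le_sup_left (α := Subgroup G) hy) (le_sup_right (α := Subgroup G) hw)
      simpa [Subgroup.mem_comap] using this
    have hk : g * x * g⁻¹ ∈ conjBy g N :=
      Subgroup.mem_map.mpr ⟨x, hxN, rfl⟩
    have hAS : A ≤ (S : Subgroup G) := inf_le_left
    have hb : (n * z) * (g * x * g⁻¹) * (n * z)⁻¹ ∈ A := hmconj _ hk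
    have hbS : (n * z) * (g * x * g⁻¹) * (n * z)⁻¹ ∈ (S : Subgroup G) := hAS hb
    have hnS : n ∈ (S : Subgroup G) := hAS hn
    have e : (z * g) * x * (z * g)⁻¹ = n⁻¹ * ((n * z) * (g * x * g⁻¹) * (n * z)⁻¹) * n := by
      group
    rw [e]
    exact mul_mem (mul_mem (inv_mem hnS) hbS) hnS
  · intro u hu
    have hgu : g * u * g⁻¹ ∈ Q := Subgroup.mem_map.mpr ⟨u, hu, rfl⟩
    rw [hC, Subgroup.mem_centralizer_iff] at hz
    have h := hz _ hgu
    have e : (z * g) * u * (z * g)⁻¹ = z * (g * u * g⁻¹) * z⁻¹ := by group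
    rw [e, ← h]; group
end

section
/- Let G and Γ be groups and let Θ be a function assigning to each element a ∈ G a nonempty subset Θ(a) ⊆ Γ, such that for all a, b ∈ G and every x ∈ Θ(a), Θ(ab) = x·Θ(b) (elementwise left translation). Then: (1) Θ(1) is a subgroup of Γ; (2) for each a ∈ G, Θ(a) is simultaneously a left coset and a right coset of Θ(1), so Θ(a) ⊆ N_Γ(Θ(1)); and (3) the induced map G → N_Γ(Θ(1))/Θ(1) sending a to the coset Θ(a) is a group homomorphism. -/
/-- Abstract properties of fusion mapping triples: if `Θ` assigns to each `a ∈ G` a nonempty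
subset of `Γ` with `Θ(ab) = x·Θ(b)` for every `x ∈ Θ(a)`, then `Θ(1)` is a subgroup, each
`Θ(a)` is both a left and a right coset of `Θ(1)` contained in the normalizer of `Θ(1)`,
and `a ↦ Θ(a)` is multiplicative. -/
theorem stmt15 {G Γ : Type*} [Group G] [Group Γ] (Θ : G → Set Γ)
    (hne : ∀ a : G, (Θ a).Nonempty)
    (hco : ∀ a b : G, ∀ x ∈ Θ a, Θ (a * b) = (fun y => x * y) '' Θ b) :
    ∃ H : Subgroup Γ, (H : Set Γ) = Θ 1
      ∧ (∀ a : G, ∀ x ∈ Θ a, Θ a = (fun y => x * y) '' Θ 1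
          ∧ Θ a = (fun y => y * x) '' Θ 1 ∧ x ∈ Subgroup.normalizer (H : Set Γ))
      ∧ (∀ a b : G, ∀ x ∈ Θ a, ∀ y ∈ Θ b, x * y ∈ Θ (a * b)) := by
  -- translation by elements of `Θ 1` preserves `Θ 1`
  have key : ∀ x ∈ Θ 1, (fun y => x * y) '' Θ 1 = Θ 1 := by
    intro x hx
    have h := hco 1 1 x hx
    rw [one_mul] at h
    exact h.symm
  have hone : (1 : Γ) ∈ Θ 1 := by
    obtain ⟨x, hx⟩ := hne 1
    have h := key x hx
    rw [← h] at hx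
    obtain ⟨y, hy, hxy⟩ := hx
    have : y = 1 := by
      have h2 : x * y = x * 1 := by simpa using hxy
      exact mul_left_cancel h2
    rwa [← this]
  have hmul : ∀ x ∈ Θ 1, ∀ y ∈ Θ 1, x * y ∈ Θ 1 := by
    intro x hx y hy
    rw [← key x hx]
    exact ⟨y, hy, rfl⟩
  have hinv : ∀ x ∈ Θ 1, x⁻¹ ∈ Θ 1 := by
    intro x hx
    have h := key x hx
    rw [← h] at hone
    obtain ⟨y, hy, hxy⟩ := hone
    have : x⁻¹ = y := inv_eq_of_mul_eq_one_right hxy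
    rwa [this]
  -- left coset description
  have hleft : ∀ a : G, ∀ x ∈ Θ a, Θ a = (fun y => x * y) '' Θ 1 := by
    intro a x hx
    have h := hco a 1 x hx
    rwa [mul_one] at h
  -- inverse elements
  have hinvmem : ∀ a : G, ∀ x ∈ Θ a, x⁻¹ ∈ Θ a⁻¹ := by
    intro a x hx
    have h := hco a a⁻¹ x hx
    rw [mul_inv_cancel] at h
    rw [h] at hone
    obtain ⟨w, hw, hxw⟩ := hone
    have : x⁻¹ = w := inv_eq_of_mul_eq_one_right hxw
    rwa [this]
  -- conjugation: x⁻¹ s x ∈ Θ 1 for s ∈ Θ 1, x ∈ Θ a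
  have hconj : ∀ a : G, ∀ x ∈ Θ a, ∀ s ∈ Θ 1, x⁻¹ * s * x ∈ Θ 1 := by
    intro a x hx s hs
    -- x⁻¹ * s ∈ Θ a⁻¹
    have h1 : x⁻¹ * s ∈ Θ a⁻¹ := by
      have h := hleft a⁻¹ x⁻¹ (hinvmem a x hx)
      rw [h]
      exact ⟨s, hs, rfl⟩
    have h2 := hco a⁻¹ a (x⁻¹ * s) h1
    rw [inv_mul_cancel] at h2
    rw [h2]
    exact ⟨x, hx, by simp [mul_assoc]⟩
  have hconj' : ∀ a : G, ∀ x ∈ Θ a, ∀ s ∈ Θ 1, x * s * x⁻¹ ∈ Θ 1 := by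
    intro a x hx s hs
    have := hconj a⁻¹ x⁻¹ (hinvmem a x hx) s hs
    simpa using this
  refine ⟨{ carrier := Θ 1, one_mem' := hone,
            mul_mem' := fun hx hy => hmul _ hx _ hy,
            inv_mem' := fun hx => hinv _ hx }, rfl, ?_, ?_⟩
  · intro a x hx
    refine ⟨hleft a x hx, ?_, ?_⟩
    · ext z
      constructor
      · intro hz
        rw [hleft a x hx] at hz
        obtain ⟨s, hs, rfl⟩ := hz
        exact ⟨x * s * x⁻¹, hconj' a x hx s hs, by group⟩
      · rintro ⟨s, hs, rfl⟩
        rw [hleft a x hx]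
        exact ⟨x⁻¹ * s * x, hconj a x hx s hs, by group⟩
    · rw [Subgroup.mem_normalizer_iff]
      intro h
      constructor
      · intro hh
        exact hconj' a x hx h hh
      · intro hh
        have := hconj a x hx _ hh
        simpa [mul_assoc] using this
  · intro a b x hx y hy
    rw [hco a b x hx]
    exact ⟨y, hy, rfl⟩
end
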